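/- Kolmogorov's classical weak law of large numbers (the basis result, condition (1)): let X_1, X_2, … be independent identically distributed real random variables on a probability space (Ω, ℱ, P) satisfying t · P(|X_1| > t) → 0 as t → ∞. Set S_n := Σ_{k=1}^n X_k and a_n := E[X_1 · 1_{|X_1| ≤ n}]. Then (S_n/n) − a_n → 0 in probability, i.e. for every ε > 0, P(|S_n/n − a_n| ≥ ε) → 0 as n → ∞. -/

import Mathlib

open MeasureTheory ProbabilityTheory Filter

/-- Kolmogorov's classical weak law of large numbers: if
`X_1, X_2, …` are pairwise independent, identically distributed real random
variables with `t P(|X_1| > t) → 0` as `t → ∞`, then with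
`a_n = E[X_1 · 1_{|X_1| ≤ n}]` one has `S_n/n − a_n → 0` in probability. -/
theorem kolmogorov_classical_wlln
    {Ω : Type*} [MeasurableSpace Ω] (P : Measure Ω) [IsProbabilityMeasure P]
    (X : ℕ → Ω → ℝ) (hX : ∀ k, Measurable (X k))
    (hindep : ∀ i j : ℕ, i ≠ j → IndepFun (X i) (X j) P)
    (hident : ∀ k : ℕ, Measure.map (X k) P = Measure.map (X 1) P)
    (hkol : Tendsto (fun t : ℝ => t * (P {ω | t < |X 1 ω|}).toReal) atTop (nhds 0))
    (a : ℕ → ℝ)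
    (ha : ∀ n : ℕ, a n = ∫ ω, Set.indicator {ω' | |X 1 ω'| ≤ (n : ℝ)} (X 1) ω ∂P) :
    ∀ ε : ℝ, 0 < ε →
      Tendsto
        (fun n : ℕ =>
          (P {ω | ε ≤ |(∑ k ∈ Finset.Icc 1 n, X k ω) / n - a n|}).toReal)
        atTop (nhds 0) := by
  classical
  intro ε hε
  -- truncation function
  set φ : ℕ → ℝ → ℝ := fun n x => if |x| ≤ (n : ℝ) then x else 0 with hφdef
  have hφmeas : ∀ n, Measurable (φ n) := fun n =>
    Measurable.ite (measurableSet_le measurable_id.abs measurable_const)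
      measurable_id measurable_const
  set Y : ℕ → ℕ → Ω → ℝ := fun n k ω => φ n (X k ω) with hYdef
  have hYmeas : ∀ n k, Measurable (Y n k) := fun n k => (hφmeas n).comp (hX k)
  have hYbound : ∀ n k ω, |Y n k ω| ≤ (n : ℝ) := by
    intro n k ω
    by_cases h : |X k ω| ≤ (n : ℝ)
    · simpa [Y, φ, h] using h
    · simp [Y, φ, h]
  have hYmem : ∀ n k, MemLp (Y n k) 2 P := fun n k =>
    memLp_of_bounded (a := -(n : ℝ)) (b := (n : ℝ))
      (ae_of_all _ fun ω => Set.mem_Icc.2 (abs_le.1 (hYbound n k ω)))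
      (hYmeas n k).aestronglyMeasurable 2
  -- identical distribution of truncations
  have hYmap : ∀ n k, Measure.map (Y n k) P = Measure.map (Y n 1) P := by
    intro n k
    have h1 : Measure.map (Y n k) P = Measure.map (φ n) (Measure.map (X k) P) :=
      (Measure.map_map (hφmeas n) (hX k)).symm
    have h2 : Measure.map (Y n 1) P = Measure.map (φ n) (Measure.map (X 1) P) :=
      (Measure.map_map (hφmeas n) (hX 1)).symm
    rw [h1, h2, hident k]
  -- expectation of each truncation is `a n`
  have hint_map : ∀ (n k : ℕ) (f : ℝ → ℝ), Measurable f →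
      ∫ ω, f (Y n k ω) ∂P = ∫ ω, f (Y n 1 ω) ∂P := by
    intro n k f hf
    have h1 : ∫ ω, f (Y n k ω) ∂P = ∫ x, f x ∂(Measure.map (Y n k) P) :=
      (integral_map (hYmeas n k).aemeasurable hf.aestronglyMeasurable).symm
    have h2 : ∫ ω, f (Y n 1 ω) ∂P = ∫ x, f x ∂(Measure.map (Y n 1) P) :=
      (integral_map (hYmeas n 1).aemeasurable hf.aestronglyMeasurable).symm
    rw [h1, h2, hYmap n k]
  have hYint : ∀ n k, ∫ ω, Y n k ω ∂P = a n := by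
    intro n k
    have h0 : ∫ ω, Y n 1 ω ∂P = a n := by
      rw [ha n]
      refine integral_congr_ae (ae_of_all _ fun ω => ?_)
      by_cases h : |X 1 ω| ≤ (n : ℝ) <;>
        simp [Set.indicator_apply, h, Y, φ, Set.mem_setOf_eq]
    rw [← h0]
    exact hint_map n k id measurable_id
  -- same variance
  have hYvar : ∀ n k, variance (Y n k) P = variance (Y n 1) P := by
    intro n k
    rw [variance_eq_sub (hYmem n k), variance_eq_sub (hYmem n 1)]
    have hsq : ∫ ω, (Y n k ω) ^ 2 ∂P = ∫ ω, (Y n 1 ω) ^ 2 ∂P :=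
      hint_map n k (fun x => x ^ 2) (measurable_id.pow_const 2)
    have h1 : ∫ ω, Y n k ω ∂P = ∫ ω, Y n 1 ω ∂P := hint_map n k id measurable_id
    simp only [Pi.pow_apply]
    rw [hsq, h1]
  -- the tail quantities
  set g : ℕ → ℝ := fun j => (j : ℝ) * (P {ω | (j : ℝ) < |X 1 ω|}).toReal with hgdef
  set h : ℕ → ℝ := fun j => (P {ω | (j : ℝ) < |X 1 ω|}).toReal with hhdef
  have hg0 : Tendsto g atTop (nhds 0) := hkol.comp tendsto_natCast_atTop_atTop
  have hh0 : Tendsto h atTop (nhds 0) := by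
    refine tendsto_of_tendsto_of_tendsto_of_le_of_le' tendsto_const_nhds hg0 ?_ ?_
    · exact Eventually.of_forall fun j => ENNReal.toReal_nonneg
    · filter_upwards [Ici_mem_atTop 1] with j hj
      have h1 : (1 : ℝ) ≤ (j : ℝ) := by exact_mod_cast hj
      calc h j = 1 * h j := (one_mul _).symm
        _ ≤ (j : ℝ) * h j := by
            exact mul_le_mul_of_nonneg_right h1 ENNReal.toReal_nonneg
  set u : ℕ → ℝ := fun j => (2 * (j : ℝ) + 3) * h j with hudef
  have hu0 : Tendsto u atTop (nhds 0) := by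
    have : Tendsto (fun j => 2 * g j + 3 * h j) atTop (nhds (2 * 0 + 3 * 0)) :=
      ((hg0.const_mul 2).add (hh0.const_mul 3))
    simp only [mul_zero, add_zero] at this
    refine this.congr fun j => ?_
    simp only [g, h, u]; ring
  -- second moment bound
  have hmoment : ∀ n : ℕ, ∫ ω, (Y n 1 ω) ^ 2 ∂P ≤ 1 + ∑ j ∈ Finset.range n, u j := by
    intro n
    have hAmeas : ∀ j : ℕ, MeasurableSet {ω | (j : ℝ) < |X 1 ω|} :=
      fun j => measurableSet_lt measurable_const (hX 1).abs
    -- pointwise bound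
    have hpt : ∀ ω, (Y n 1 ω) ^ 2 ≤ 1 + ∑ j ∈ Finset.range n,
        Set.indicator {ω' | (j : ℝ) < |X 1 ω'|} (fun _ => 2 * (j : ℝ) + 3) ω := by
      intro ω
      have hnonneg : ∀ j ∈ Finset.range n,
          (0:ℝ) ≤ Set.indicator {ω' | (j : ℝ) < |X 1 ω'|} (fun _ => 2 * (j : ℝ) + 3) ω := by
        intro j _
        exact Set.indicator_nonneg (fun _ _ => by positivity) ω
      by_cases hcase : |X 1 ω| ≤ (n : ℝ)
      · -- Y = X 1 ω here
        have hY : Y n 1 ω = X 1 ω := by simp [Y, φ, hcase]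
        set x : ℝ := |X 1 ω| with hxdef
        have hx0 : 0 ≤ x := abs_nonneg _
        set m : ℕ := ⌊x⌋₊ with hmdef
        have hmn : m ≤ n := Nat.floor_le_of_le hcase
        have hxm : x < (m : ℝ) + 1 := Nat.lt_floor_add_one x
        have hsub : Finset.range m ⊆ Finset.range n := Finset.range_subset_range.2 hmn
        have hstep : ∀ j ∈ Finset.range m,
            (2 * (j : ℝ) + 3) ≤
              Set.indicator {ω' | (j : ℝ) < |X 1 ω'|} (fun _ => 2 * (j : ℝ) + 3) ω := by
          intro j hj
          have hjm : (j : ℝ) < x := by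
            have : (j : ℝ) < (m : ℝ) := by exact_mod_cast Finset.mem_range.1 hj
            exact this.trans_le (Nat.floor_le hx0)
          have heq := Set.indicator_of_mem
            (show ω ∈ {ω' | (j : ℝ) < |X 1 ω'|} from hjm) (fun _ => 2 * (j : ℝ) + 3)
          rw [heq]
        have hsum : ∑ j ∈ Finset.range m, (2 * (j : ℝ) + 3) ≤
            ∑ j ∈ Finset.range n,
              Set.indicator {ω' | (j : ℝ) < |X 1 ω'|} (fun _ => 2 * (j : ℝ) + 3) ω := by
          calc ∑ j ∈ Finset.range m, (2 * (j : ℝ) + 3)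
              ≤ ∑ j ∈ Finset.range m,
                Set.indicator {ω' | (j : ℝ) < |X 1 ω'|} (fun _ => 2 * (j : ℝ) + 3) ω :=
                Finset.sum_le_sum hstep
            _ ≤ ∑ j ∈ Finset.range n,
                Set.indicator {ω' | (j : ℝ) < |X 1 ω'|} (fun _ => 2 * (j : ℝ) + 3) ω :=
                Finset.sum_le_sum_of_subset_of_nonneg hsub
                  (fun j hj _ => hnonneg j hj)
        have hval : ∑ j ∈ Finset.range m, (2 * (j : ℝ) + 3) = (m : ℝ) ^ 2 + 2 * m := by
          induction m with
          | zero => simp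
          | succ k ih =>
              rw [Finset.sum_range_succ, ih]
              push_cast; ring
        have hx2 : (Y n 1 ω) ^ 2 ≤ ((m : ℝ) + 1) ^ 2 := by
          rw [hY]
          have : |X 1 ω| ≤ (m : ℝ) + 1 := hxm.le
          calc (X 1 ω) ^ 2 = |X 1 ω| ^ 2 := (sq_abs _).symm
            _ ≤ ((m : ℝ) + 1) ^ 2 := by
                apply pow_le_pow_left₀ (abs_nonneg _) this
        calc (Y n 1 ω) ^ 2 ≤ ((m : ℝ) + 1) ^ 2 := hx2
          _ = 1 + ((m : ℝ) ^ 2 + 2 * m) := by ring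
          _ ≤ 1 + ∑ j ∈ Finset.range n,
              Set.indicator {ω' | (j : ℝ) < |X 1 ω'|} (fun _ => 2 * (j : ℝ) + 3) ω := by
              rw [← hval]; linarith [hsum]
      · have hY : Y n 1 ω = 0 := by simp [Y, φ, hcase]
        rw [hY]
        have : (0:ℝ) ≤ ∑ j ∈ Finset.range n,
            Set.indicator {ω' | (j : ℝ) < |X 1 ω'|} (fun _ => 2 * (j : ℝ) + 3) ω :=
          Finset.sum_nonneg hnonneg
        nlinarith
    -- integrate the pointwise bound
    have hInd : ∀ j : ℕ, Integrable
        (fun ω => Set.indicator {ω' | (j : ℝ) < |X 1 ω'|} (fun _ => 2 * (j : ℝ) + 3) ω) P :=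
      fun j => (integrable_const (2 * (j : ℝ) + 3)).indicator (hAmeas j)
    have hSum : Integrable (fun ω => ∑ j ∈ Finset.range n,
        Set.indicator {ω' | (j : ℝ) < |X 1 ω'|} (fun _ => 2 * (j : ℝ) + 3) ω) P :=
      integrable_finset_sum _ fun j _ => hInd j
    have hintRHS : Integrable (fun ω => 1 + ∑ j ∈ Finset.range n,
        Set.indicator {ω' | (j : ℝ) < |X 1 ω'|} (fun _ => 2 * (j : ℝ) + 3) ω) P :=
      (integrable_const 1).add hSum
    have hmono := integral_mono (hYmem n 1).integrable_sq hintRHS hpt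
    refine hmono.trans_eq ?_
    rw [integral_add (integrable_const 1) hSum]
    rw [integral_finset_sum _ fun j _ => hInd j]
    simp only [integral_const, probReal_univ, measure_univ, ENNReal.toReal_one, smul_eq_mul, one_mul]
    congr 1
    refine Finset.sum_congr rfl fun j _ => ?_
    rw [integral_indicator_const _ (hAmeas j)]
    simp only [smul_eq_mul, measureReal_def, u, h]
    ring
  -- limit of the bound
  set R : ℕ → ℝ := fun n => g n + (1 + ∑ j ∈ Finset.range n, u j) / (n * ε ^ 2) with hRdef
  have hR0 : Tendsto R atTop (nhds 0) := by
    have h1 : Tendsto (fun n : ℕ => (n : ℝ)⁻¹ * ∑ j ∈ Finset.range n, u j) atTop (nhds 0) :=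
      hu0.cesaro
    have h2 : Tendsto (fun n : ℕ => (n : ℝ)⁻¹) atTop (nhds 0) :=
      tendsto_inv_atTop_zero.comp tendsto_natCast_atTop_atTop
    have h3 : Tendsto (fun n : ℕ =>
        ((n : ℝ)⁻¹ + (n : ℝ)⁻¹ * ∑ j ∈ Finset.range n, u j) * (ε ^ 2)⁻¹) atTop
        (nhds ((0 + 0) * (ε ^ 2)⁻¹)) := (h2.add h1).mul_const _
    simp only [add_zero, zero_add, zero_mul] at h3
    have := hg0.add h3
    rw [add_zero] at this
    refine this.congr fun n => ?_
    simp only [R]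
    congr 1
    field_simp
  -- main estimate, valid for n ≥ 1
  have hbound : ∀ n : ℕ, 1 ≤ n →
      (P {ω | ε ≤ |(∑ k ∈ Finset.Icc 1 n, X k ω) / n - a n|}).toReal ≤ R n := by
    intro n hn
    have hnpos : (0 : ℝ) < n := by exact_mod_cast hn
    set T : Ω → ℝ := ∑ k ∈ Finset.Icc 1 n, Y n k with hTdef
    have hTmem : MemLp T 2 P := memLp_finset_sum' _ fun k _ => hYmem n k
    have hTmean : P[T] = n * a n := by
      have : ∫ ω, T ω ∂P = ∑ k ∈ Finset.Icc 1 n, ∫ ω, Y n k ω ∂P := by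
        simp only [T, Finset.sum_apply]
        exact integral_finset_sum _ fun k _ => (hYmem n k).integrable one_le_two
      rw [show P[T] = ∫ ω, T ω ∂P from rfl, this]
      rw [Finset.sum_congr rfl fun k _ => hYint n k]
      simp [Nat.card_Icc]
    have hTvar : variance T P = n * variance (Y n 1) P := by
      rw [hTdef, IndepFun.variance_sum (fun k _ => hYmem n k)
        (fun i _ j _ hij => (hindep i j hij).comp (hφmeas n) (hφmeas n))]
      rw [Finset.sum_congr rfl fun k _ => hYvar n k]
      simp [Nat.card_Icc]
    -- Chebyshev
    have hcheb := meas_ge_le_variance_div_sq (μ := P) hTmem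
      (c := (n : ℝ) * ε) (by positivity)
    -- union bound sets
    set A : Set Ω := ⋃ k ∈ Finset.Icc 1 n, {ω | (n : ℝ) < |X k ω|} with hAdef
    set B : Set Ω := {ω | (n : ℝ) * ε ≤ |T ω - P[T]|} with hBdef
    have hsub : {ω | ε ≤ |(∑ k ∈ Finset.Icc 1 n, X k ω) / n - a n|} ⊆ A ∪ B := by
      intro ω hω
      by_cases hA : ∃ k ∈ Finset.Icc 1 n, (n : ℝ) < |X k ω|
      · left
        obtain ⟨k, hk, hk'⟩ := hA
        exact Set.mem_biUnion hk hk'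
      · right
        push_neg at hA
        have hTS : T ω = ∑ k ∈ Finset.Icc 1 n, X k ω := by
          simp only [T, Finset.sum_apply]
          exact Finset.sum_congr rfl fun k hk => by simp [Y, φ, hA k hk]
        have hω' : ε ≤ |(∑ k ∈ Finset.Icc 1 n, X k ω) / n - a n| := hω
        have key : (n : ℝ) * ε ≤ |(∑ k ∈ Finset.Icc 1 n, X k ω) - n * a n| := by
          have hdiv : (∑ k ∈ Finset.Icc 1 n, X k ω) / n - a n
              = ((∑ k ∈ Finset.Icc 1 n, X k ω) - n * a n) / n := by
            field_simp
          rw [hdiv, abs_div, abs_of_pos hnpos, le_div_iff₀ hnpos] at hω'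
          linarith
        show (n : ℝ) * ε ≤ |T ω - P[T]|
        rw [hTS, hTmean]
        exact key
    -- measure of A
    have hAmeasset : MeasurableSet {x : ℝ | (n : ℝ) < |x|} :=
      measurableSet_lt measurable_const measurable_abs
    have hPA : P A ≤ (n : ENNReal) * P {ω | (n : ℝ) < |X 1 ω|} := by
      refine (measure_biUnion_finset_le _ _).trans ?_
      have heq : ∀ k, P {ω | (n : ℝ) < |X k ω|} = P {ω | (n : ℝ) < |X 1 ω|} := by
        intro k
        have h1 : {ω | (n : ℝ) < |X k ω|} = X k ⁻¹' {x | (n : ℝ) < |x|} := rfl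
        have h2 : {ω | (n : ℝ) < |X 1 ω|} = X 1 ⁻¹' {x | (n : ℝ) < |x|} := rfl
        rw [h1, h2, ← Measure.map_apply (hX k) hAmeasset,
          ← Measure.map_apply (hX 1) hAmeasset, hident k]
      rw [Finset.sum_congr rfl fun k _ => heq k]
      simp [Nat.card_Icc]
    -- assemble
    have hPE : P {ω | ε ≤ |(∑ k ∈ Finset.Icc 1 n, X k ω) / n - a n|} ≤ P A + P B :=
      (measure_mono hsub).trans (measure_union_le A B)
    have hPB : P B ≤ ENNReal.ofReal (variance T P / ((n : ℝ) * ε) ^ 2) := hcheb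
    have hfinA : P A ≠ ⊤ := (measure_lt_top P A).ne
    have hfinB : P B ≠ ⊤ := (measure_lt_top P B).ne
    have htR : (P {ω | ε ≤ |(∑ k ∈ Finset.Icc 1 n, X k ω) / n - a n|}).toReal
        ≤ (P A).toReal + (P B).toReal := by
      rw [← ENNReal.toReal_add hfinA hfinB]
      exact ENNReal.toReal_mono (by finiteness) hPE
    have hA' : (P A).toReal ≤ g n := by
      have := ENNReal.toReal_mono (by finiteness) hPA
      rwa [ENNReal.toReal_mul, ENNReal.toReal_natCast] at this
    have hB' : (P B).toReal ≤ (1 + ∑ j ∈ Finset.range n, u j) / (n * ε ^ 2) := by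
      have h1 := ENNReal.toReal_mono ENNReal.ofReal_ne_top hPB
      rw [ENNReal.toReal_ofReal (div_nonneg (variance_nonneg _ _) (by positivity))] at h1
      refine h1.trans ?_
      rw [hTvar]
      have hvv : variance (Y n 1) P ≤ 1 + ∑ j ∈ Finset.range n, u j := by
        refine (variance_le_expectation_sq (hYmem n 1).aestronglyMeasurable).trans ?_
        have := hmoment n
        simpa using this
      have heq : (n : ℝ) * variance (Y n 1) P / ((n : ℝ) * ε) ^ 2
          = variance (Y n 1) P / (n * ε ^ 2) := by
        field_simp
      rw [heq]
      gcongr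
    calc (P {ω | ε ≤ |(∑ k ∈ Finset.Icc 1 n, X k ω) / n - a n|}).toReal
        ≤ (P A).toReal + (P B).toReal := htR
      _ ≤ g n + (1 + ∑ j ∈ Finset.range n, u j) / (n * ε ^ 2) := add_le_add hA' hB'
      _ = R n := rfl
  -- squeeze
  refine tendsto_of_tendsto_of_tendsto_of_le_of_le' tendsto_const_nhds hR0 ?_ ?_
  · exact Eventually.of_forall fun n => ENNReal.toReal_nonneg
  · filter_upwards [Ici_mem_atTop 1] with n hn
    exact hbound n hn
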